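/- Let A be an ω-categorical relational structure with countably infinite domain Ω. Then each of the structures E_{Aut(A)}, E_{End(A)} and E_{Pol(A)} is ω-categorical; that is, for 𝒜 ∈ {Aut(A), End(A), Pol(A)}, the group of all bijections θ: Ω → Ω with θ(O_{k,n}^𝒜) = O_{k,n}^𝒜 for all k, n ≥ 1 is oligomorphic. -/

import Mathlib

/-- The topology of pointwise convergence on functions `α → β`
(product topology with `β` discrete). -/
def FnTop (α β : Type*) : TopologicalSpace (α → β) :=
  @Pi.topologicalSpace α (fun _ => β) (fun _ => ⊥)

/-- The coordinatewise action of a permutation on tuples. -/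
def tAct {Ω : Type*} (g : Equiv.Perm Ω) {n : ℕ} (u : Fin n → Ω) : Fin n → Ω :=
  fun i => g (u i)

/-- The action of a permutation on sets of tuples. -/
def sAct {Ω : Type*} (g : Equiv.Perm Ω) {n : ℕ} (c : Set (Fin n → Ω)) : Set (Fin n → Ω) :=
  tAct g '' c

/-- A set of permutations is oligomorphic if for every `n` its coordinatewise
action on `n`-tuples has finitely many orbits. -/
def Oligo {Ω : Type*} (G : Set (Equiv.Perm Ω)) : Prop :=
  ∀ n : ℕ, Set.Finite {o : Set (Fin n → Ω) | ∃ t : Fin n → Ω, o = {s | ∃ g ∈ G, s = tAct g t}}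

/-- `G` acts without algebraicity on `Ω`: if the orbit of `a` under the pointwise
stabiliser of a finite tuple `y` is finite, then `a` is an entry of `y`. -/
def NoAlg {Ω : Type*} (G : Set (Equiv.Perm Ω)) : Prop :=
  ∀ (m : ℕ) (y : Fin m → Ω) (a : Ω),
    Set.Finite {b : Ω | ∃ g ∈ G, (∀ i, g (y i) = y i) ∧ b = g a} → ∃ i, a = y i

/-- `G` is topologically closed in the space of permutations with the topology of
pointwise convergence. -/
def TopClosedPerm {Ω : Type*} (G : Set (Equiv.Perm Ω)) : Prop :=
  @IsClosed (Ω → Ω) (FnTop Ω Ω) {f | ∃ g ∈ G, f = ⇑g}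

/-- The `r`-equivalence class of a tuple `u ∈ U`. -/
def cls {Ω : Type*} {n : ℕ} (U : Set (Fin n → Ω))
    (r : (Fin n → Ω) → (Fin n → Ω) → Prop) (u : Fin n → Ω) : Set (Fin n → Ω) :=
  {v ∈ U | r u v}

/-- The quotient `B = U/∼`, realised as the set of equivalence classes. -/
def classes {Ω : Type*} {n : ℕ} (U : Set (Fin n → Ω))
    (r : (Fin n → Ω) → (Fin n → Ω) → Prop) : Set (Set (Fin n → Ω)) :=
  {c | ∃ u ∈ U, c = cls U r u}

/-- `a` entangles the class `c` if `a` is an entry of every tuple in `c`. -/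
def Entangles {Ω : Type*} {n : ℕ} (a : Ω) (c : Set (Fin n → Ω)) : Prop :=
  ∀ v ∈ c, ∃ i, v i = a

/-- `a` strongly entangles `c ∈ B` if it entangles `c` and no other element of `B`. -/
def StronglyEntangles {Ω : Type*} {n : ℕ} (B : Set (Set (Fin n → Ω))) (a : Ω)
    (c : Set (Fin n → Ω)) : Prop :=
  Entangles a c ∧ ∀ c' ∈ B, Entangles a c' → c' = c

/-- `a` is algebraic over `c`: the orbit of `a` under the stabiliser `G_c` is finite. -/
def AlgebraicOver {Ω : Type*} {n : ℕ} (G : Set (Equiv.Perm Ω)) (a : Ω)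
    (c : Set (Fin n → Ω)) : Prop :=
  Set.Finite {b : Ω | ∃ g ∈ G, sAct g c = c ∧ b = g a}

/-- `B` is dense: for every `a ∈ Ω` there are `c₁,…,c_k ∈ B` whose joint stabiliser
is contained in the stabiliser of `a`. -/
def DenseClasses {Ω : Type*} {n : ℕ} (G : Set (Equiv.Perm Ω))
    (B : Set (Set (Fin n → Ω))) : Prop :=
  ∀ a : Ω, ∃ (k : ℕ) (cc : Fin k → Set (Fin n → Ω)),
    (∀ i, cc i ∈ B) ∧ ∀ g ∈ G, (∀ i, sAct g (cc i) = cc i) → g a = a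

/-- The induced action of `G` on `B` is without algebraicity. -/
def NoAlgOn {Ω : Type*} {n : ℕ} (G : Set (Equiv.Perm Ω))
    (B : Set (Set (Fin n → Ω))) : Prop :=
  ∀ (m : ℕ) (cc : Fin m → Set (Fin n → Ω)) (c : Set (Fin n → Ω)),
    (∀ i, cc i ∈ B) → c ∈ B →
    Set.Finite {c' | ∃ g ∈ G, (∀ i, sAct g (cc i) = cc i) ∧ c' = sAct g c} →
    ∃ i, c = cc i

open FirstOrder Language Structure in
/-- A permutation is an automorphism of the `L`-structure `Ω` if it preserves
every relation and its complement. -/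
def IsAutPerm (L : FirstOrder.Language) (Ω : Type*) [L.Structure Ω] (g : Equiv.Perm Ω) : Prop :=
  ∀ (n : ℕ) (R : L.Relations n) (t : Fin n → Ω), RelMap R (⇑g ∘ t) ↔ RelMap R t

open FirstOrder Language Structure in
/-- The automorphism group of the `L`-structure `Ω`, as a subgroup of `Equiv.Perm Ω`. -/
def autGroup (L : FirstOrder.Language) (Ω : Type*) [L.Structure Ω] : Subgroup (Equiv.Perm Ω) where
  carrier := {g | IsAutPerm L Ω g}
  one_mem' := by
    intro n R t
    exact Iff.rfl
  mul_mem' := by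
    intro a b ha hb n R t
    have h1 : ⇑(a * b) ∘ t = ⇑a ∘ (⇑b ∘ t) := by
      ext i; simp [Equiv.Perm.mul_apply]
    rw [h1]
    exact (ha n R (⇑b ∘ t)).trans (hb n R t)
  inv_mem' := by
    intro a ha n R t
    have h := ha n R (⇑a⁻¹ ∘ t)
    have h2 : ⇑a ∘ (⇑a⁻¹ ∘ t) = t := by ext i; simp
    rw [h2] at h
    exact h.symm

/-- The topology of pointwise convergence on the automorphism group. -/
def autTop (L : FirstOrder.Language) (Ω : Type*) [L.Structure Ω] :
    TopologicalSpace (autGroup L Ω) :=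
  TopologicalSpace.induced (fun g => ((g : Equiv.Perm Ω) : Ω → Ω)) (FnTop Ω Ω)

/-- The topology of pointwise convergence on `k`-ary operations. -/
def opTop (Ω : Type*) (k : ℕ) : TopologicalSpace ((Fin k → Ω) → Ω) :=
  @Pi.topologicalSpace _ _ (fun _ => ⊥)

/-- The relation `O_{k,n}` of the structure `E_𝒜`: all tuples
`(x₁,…,x_k, f(x₁,…,x_k))` with `x₁,…,x_k ∈ Ω^n` and `f ∈ 𝒜` of arity `k`,
encoded via `k+1` blocks of length `n`. -/
def ORel {Ω : Type*} (A : ∀ k : ℕ, Set ((Fin k → Ω) → Ω)) (k n : ℕ) :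
    Set (Fin (k + 1) → Fin n → Ω) :=
  {z | ∃ f ∈ A k, z (Fin.last k) = fun j => f (fun i => z (Fin.castSucc i) j)}

open FirstOrder Language Structure in
/-- The automorphisms of the `L`-structure `Ω`, viewed as a set of (unary)
finitary operations, indexed by arity. -/
def AutFam (L : FirstOrder.Language) (Ω : Type*) [L.Structure Ω] :
    ∀ k : ℕ, Set ((Fin k → Ω) → Ω) := fun k =>
  {h | ∃ g : Equiv.Perm Ω, IsAutPerm L Ω g ∧
    ∃ hk : k = 1, ∀ v : Fin k → Ω, h v = g (v (Fin.cast hk.symm 0))}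

open FirstOrder Language Structure in
/-- The endomorphisms of the `L`-structure `Ω`, viewed as a set of (unary)
finitary operations, indexed by arity. -/
def EndFam (L : FirstOrder.Language) (Ω : Type*) [L.Structure Ω] :
    ∀ k : ℕ, Set ((Fin k → Ω) → Ω) := fun k =>
  {h | ∃ e : Ω → Ω, (∀ (m : ℕ) (R : L.Relations m) (t : Fin m → Ω),
      RelMap R t → RelMap R (e ∘ t)) ∧
    ∃ hk : k = 1, ∀ v : Fin k → Ω, h v = e (v (Fin.cast hk.symm 0))}

open FirstOrder Language Structure in
/-- The polymorphisms of the `L`-structure `Ω`, indexed by arity. -/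
def PolFam (L : FirstOrder.Language) (Ω : Type*) [L.Structure Ω] :
    ∀ k : ℕ, Set ((Fin k → Ω) → Ω) := fun k =>
  {h | ∀ (m : ℕ) (R : L.Relations m) (ts : Fin k → Fin m → Ω),
    (∀ j, RelMap R (ts j)) → RelMap R (fun i => h (fun j => ts j i))}

/-- The automorphisms of the structure `E_𝒜`: permutations preserving every
relation `O_{k,n}` setwise. -/
def EAut {Ω : Type*} (A : ∀ k : ℕ, Set ((Fin k → Ω) → Ω)) : Set (Equiv.Perm Ω) :=
  {θ | ∀ k n : ℕ, 1 ≤ k → 1 ≤ n →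
    (fun z : Fin (k + 1) → Fin n → Ω => fun i j => θ (z i j)) '' ORel A k n = ORel A k n}


section Aux

open FirstOrder Language Structure

lemma isAutPerm_one (L : FirstOrder.Language) (Ω : Type*) [L.Structure Ω] :
    IsAutPerm L Ω 1 := fun _ _ _ => Iff.rfl

lemma isAutPerm_mul {L : FirstOrder.Language} {Ω : Type*} [L.Structure Ω]
    {a b : Equiv.Perm Ω} (ha : IsAutPerm L Ω a) (hb : IsAutPerm L Ω b) :
    IsAutPerm L Ω (a * b) := by
  intro n R t
  have h1 : ⇑(a * b) ∘ t = ⇑a ∘ (⇑b ∘ t) := by ext i; simp [Equiv.Perm.mul_apply]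
  rw [h1]
  exact (ha n R (⇑b ∘ t)).trans (hb n R t)

lemma isAutPerm_inv {L : FirstOrder.Language} {Ω : Type*} [L.Structure Ω]
    {a : Equiv.Perm Ω} (ha : IsAutPerm L Ω a) : IsAutPerm L Ω a⁻¹ := by
  intro n R t
  have h := ha n R (⇑a⁻¹ ∘ t)
  have h2 : ⇑a ∘ (⇑a⁻¹ ∘ t) = t := by ext i; simp
  rw [h2] at h
  exact h.symm

/-- If coordinatewise conjugation by `σ` maps `A` into itself, then the
coordinatewise image of `ORel A k n` under `σ` is contained in `ORel A k n`. -/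
lemma oRel_image_subset {Ω : Type*} (A : ∀ k : ℕ, Set ((Fin k → Ω) → Ω))
    (σ : Equiv.Perm Ω)
    (hconj : ∀ k, ∀ f ∈ A k,
      (fun v : Fin k → Ω => σ (f (fun j => σ⁻¹ (v j)))) ∈ A k)
    (k n : ℕ) :
    (fun z : Fin (k + 1) → Fin n → Ω => fun i j => σ (z i j)) '' ORel A k n
      ⊆ ORel A k n := by
  rintro _ ⟨z, ⟨f, hf, hz⟩, rfl⟩
  refine ⟨fun v => σ (f (fun j => σ⁻¹ (v j))), hconj k f hf, ?_⟩
  funext j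
  simp only [hz]
  congr 1
  congr 1
  funext i
  simp

/-- If coordinatewise conjugation by both `σ` and `σ⁻¹` maps `A` into itself,
then `σ ∈ EAut A`. -/
lemma mem_EAut_of_conj {Ω : Type*} (A : ∀ k : ℕ, Set ((Fin k → Ω) → Ω))
    (σ : Equiv.Perm Ω)
    (hσ : ∀ k, ∀ f ∈ A k,
      (fun v : Fin k → Ω => σ (f (fun j => σ⁻¹ (v j)))) ∈ A k)
    (hσ' : ∀ k, ∀ f ∈ A k,
      (fun v : Fin k → Ω => σ⁻¹ (f (fun j => σ⁻¹⁻¹ (v j)))) ∈ A k) :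
    σ ∈ EAut A := by
  intro k n _ _
  apply Set.Subset.antisymm (oRel_image_subset A σ hσ k n)
  intro z hz
  refine ⟨fun i j => σ⁻¹ (z i j), oRel_image_subset A σ⁻¹ hσ' k n ⟨z, hz, rfl⟩, ?_⟩
  funext i j
  simp

lemma one_mem_EAut {Ω : Type*} (A : ∀ k : ℕ, Set ((Fin k → Ω) → Ω)) :
    (1 : Equiv.Perm Ω) ∈ EAut A := by
  have h : ∀ k, ∀ f ∈ A k,
      (fun v : Fin k → Ω => (1 : Equiv.Perm Ω) (f (fun j => (1 : Equiv.Perm Ω)⁻¹ (v j)))) ∈ A k := by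
    intro k f hf
    have : (fun v : Fin k → Ω => (1 : Equiv.Perm Ω) (f (fun j => (1 : Equiv.Perm Ω)⁻¹ (v j)))) = f := by
      funext v; simp
    rw [this]; exact hf
  exact mem_EAut_of_conj A 1 h (by simp only [inv_one]; exact h)

lemma mul_mem_EAut {Ω : Type*} {A : ∀ k : ℕ, Set ((Fin k → Ω) → Ω)}
    {θ₁ θ₂ : Equiv.Perm Ω} (h1 : θ₁ ∈ EAut A) (h2 : θ₂ ∈ EAut A) :
    θ₁ * θ₂ ∈ EAut A := by
  intro k n hk hn
  have key : (fun z : Fin (k + 1) → Fin n → Ω => fun i j => (θ₁ * θ₂) (z i j))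
      = (fun z : Fin (k + 1) → Fin n → Ω => fun i j => θ₁ (z i j))
        ∘ (fun z : Fin (k + 1) → Fin n → Ω => fun i j => θ₂ (z i j)) := by
    funext z; simp [Equiv.Perm.mul_apply, Function.comp]
  rw [key, Set.image_comp, h2 k n hk hn, h1 k n hk hn]

/-- Transferring oligomorphicity to a larger "group". -/
lemma oligo_mono {Ω : Type*} {G H : Set (Equiv.Perm Ω)}
    (hGH : G ⊆ H) (hone : (1 : Equiv.Perm Ω) ∈ G)
    (hmul : ∀ g ∈ H, ∀ h ∈ H, g * h ∈ H)
    (hG : Oligo G) : Oligo H := by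
  intro n
  set Φ : Set (Fin n → Ω) → Set (Fin n → Ω) :=
    fun c => {s | ∃ g ∈ H, ∃ u ∈ c, s = tAct g u} with hΦ
  refine Set.Finite.subset ((hG n).image Φ) ?_
  rintro o ⟨t, rfl⟩
  refine ⟨{s | ∃ g ∈ G, s = tAct g t}, ⟨t, rfl⟩, ?_⟩
  apply Set.Subset.antisymm
  · rintro s ⟨g, hg, hu, ⟨h, hh, rfl⟩, rfl⟩
    refine ⟨g * h, hmul g hg h (hGH hh), ?_⟩
    funext i
    simp [tAct, Equiv.Perm.mul_apply]
  · rintro s ⟨g, hg, rfl⟩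
    exact ⟨g, hg, t, ⟨1, hone, by funext i; simp [tAct]⟩, rfl⟩

/-- Conjugation closure of `AutFam`. -/
lemma autFam_conj {L : FirstOrder.Language} {Ω : Type*} [L.Structure Ω]
    {σ : Equiv.Perm Ω} (hσ : IsAutPerm L Ω σ) :
    ∀ k, ∀ f ∈ AutFam L Ω k,
      (fun v : Fin k → Ω => σ (f (fun j => σ⁻¹ (v j)))) ∈ AutFam L Ω k := by
  rintro k f ⟨g, hg, hk, hv⟩
  refine ⟨σ * g * σ⁻¹, isAutPerm_mul (isAutPerm_mul hσ hg) (isAutPerm_inv hσ), hk, ?_⟩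
  intro v
  simp [hv, Equiv.Perm.mul_apply]

lemma autFam_mono {L : FirstOrder.Language} {Ω : Type*} [L.Structure Ω]
    {σ : Equiv.Perm Ω} (hσ : IsAutPerm L Ω σ) : σ ∈ EAut (AutFam L Ω) :=
  mem_EAut_of_conj _ σ (autFam_conj hσ) (autFam_conj (isAutPerm_inv hσ))

/-- Conjugation closure of `EndFam`. -/
lemma endFam_conj {L : FirstOrder.Language} {Ω : Type*} [L.Structure Ω]
    {σ : Equiv.Perm Ω} (hσ : IsAutPerm L Ω σ) :
    ∀ k, ∀ f ∈ EndFam L Ω k,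
      (fun v : Fin k → Ω => σ (f (fun j => σ⁻¹ (v j)))) ∈ EndFam L Ω k := by
  rintro k f ⟨e, he, hk, hv⟩
  refine ⟨fun x => σ (e (σ⁻¹ x)), ?_, hk, ?_⟩
  · intro m R t ht
    have h1 : RelMap R (⇑σ⁻¹ ∘ t) := (isAutPerm_inv hσ m R t).mpr ht
    have h2 : RelMap R (e ∘ (⇑σ⁻¹ ∘ t)) := he m R _ h1
    have h3 := (hσ m R (e ∘ (⇑σ⁻¹ ∘ t))).mpr h2
    have : ⇑σ ∘ (e ∘ (⇑σ⁻¹ ∘ t)) = (fun x => σ (e (σ⁻¹ x))) ∘ t := by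
      funext i; simp [Function.comp]
    rwa [this] at h3
  · intro v
    simp [hv]

lemma endFam_mono {L : FirstOrder.Language} {Ω : Type*} [L.Structure Ω]
    {σ : Equiv.Perm Ω} (hσ : IsAutPerm L Ω σ) : σ ∈ EAut (EndFam L Ω) :=
  mem_EAut_of_conj _ σ (endFam_conj hσ) (endFam_conj (isAutPerm_inv hσ))

/-- Conjugation closure of `PolFam`. -/
lemma polFam_conj {L : FirstOrder.Language} {Ω : Type*} [L.Structure Ω]
    {σ : Equiv.Perm Ω} (hσ : IsAutPerm L Ω σ) :
    ∀ k, ∀ f ∈ PolFam L Ω k,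
      (fun v : Fin k → Ω => σ (f (fun j => σ⁻¹ (v j)))) ∈ PolFam L Ω k := by
  intro k f hf m R ts hts
  have h1 : ∀ j, RelMap R (fun i => σ⁻¹ (ts j i)) := by
    intro j
    have := (isAutPerm_inv hσ m R (ts j)).mpr (hts j)
    simpa [Function.comp_def] using this
  have h2 : RelMap R (fun i => f (fun j => σ⁻¹ (ts j i))) := hf m R _ h1
  have h3 := (hσ m R (fun i => f (fun j => σ⁻¹ (ts j i)))).mpr h2
  simpa [Function.comp_def] using h3

lemma polFam_mono {L : FirstOrder.Language} {Ω : Type*} [L.Structure Ω]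
    {σ : Equiv.Perm Ω} (hσ : IsAutPerm L Ω σ) : σ ∈ EAut (PolFam L Ω) :=
  mem_EAut_of_conj _ σ (polFam_conj hσ) (polFam_conj (isAutPerm_inv hσ))

end Aux

/-- If `A` is an ω-categorical structure, then the structures `E_{Aut(A)}`,
`E_{End(A)}` and `E_{Pol(A)}` are ω-categorical as well. -/
theorem ORel_structures_omegaCategorical
    {Ω : Type} [Countable Ω] [Infinite Ω]
    (L : FirstOrder.Language) [L.IsRelational] [L.Structure Ω]
    (hAoligo : Oligo {g : Equiv.Perm Ω | IsAutPerm L Ω g}) :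
    Oligo (EAut (AutFam L Ω)) ∧ Oligo (EAut (EndFam L Ω)) ∧ Oligo (EAut (PolFam L Ω)) := by
  refine ⟨?_, ?_, ?_⟩
  · exact oligo_mono (fun g hg => autFam_mono hg) (isAutPerm_one L Ω)
      (fun g hg h hh => mul_mem_EAut hg hh) hAoligo
  · exact oligo_mono (fun g hg => endFam_mono hg) (isAutPerm_one L Ω)
      (fun g hg h hh => mul_mem_EAut hg hh) hAoligo
  · exact oligo_mono (fun g hg => polFam_mono hg) (isAutPerm_one L Ω)
      (fun g hg h hh => mul_mem_EAut hg hh) hAoligo
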